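/- Let A be a nilpotent left Leibniz algebra over ℂ with dim Leib(A) = 1. Then Leib(A) ⊆ Z(A). -/

import Mathlib

/-- The left Leibniz identity for a bilinear bracket:
`[a,[b,c]] = [[a,b],c] + [b,[a,c]]`. -/
def IsLeibnizBracket {K A : Type*} [CommRing K] [AddCommGroup A] [Module K A]
    (br : A →ₗ[K] A →ₗ[K] A) : Prop :=
  ∀ a b c : A, br a (br b c) = br (br a b) c + br b (br a c)

/-- The span of all brackets `[s,t]` with `s ∈ S`, `t ∈ T`. -/
def bracketSpan {K A : Type*} [CommRing K] [AddCommGroup A] [Module K A]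
    (br : A →ₗ[K] A →ₗ[K] A) (S T : Submodule K A) : Submodule K A :=
  Submodule.span K {x | ∃ s ∈ S, ∃ t ∈ T, br s t = x}

/-- Lower central series: `lcs br n = A^(n+1)`, i.e. `lcs br 0 = A¹ = A` and
`lcs br (n+1) = [A, lcs br n]`. -/
def lcs {K A : Type*} [CommRing K] [AddCommGroup A] [Module K A]
    (br : A →ₗ[K] A →ₗ[K] A) : ℕ → Submodule K A
  | 0 => ⊤
  | n + 1 => bracketSpan br ⊤ (lcs br n)

/-- `Leib(A)`: the span of all squares `[a,a]`. -/
def leibIdeal {K A : Type*} [CommRing K] [AddCommGroup A] [Module K A]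
    (br : A →ₗ[K] A →ₗ[K] A) : Submodule K A :=
  Submodule.span K {x | ∃ a : A, br a a = x}

/-- The center `Z(A) = {x : [a,x] = 0 = [x,a] for all a}`. -/
def leibnizCenter {K A : Type*} [CommRing K] [AddCommGroup A] [Module K A]
    (br : A →ₗ[K] A →ₗ[K] A) : Submodule K A where
  carrier := {x | ∀ a : A, br a x = 0 ∧ br x a = 0}
  add_mem' := by
    intro x y hx hy a
    constructor <;>
      simp [map_add, LinearMap.add_apply, (hx a).1, (hx a).2, (hy a).1, (hy a).2]
  zero_mem' := by
    intro a
    constructor <;> simp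
  smul_mem' := by
    intro c x hx a
    constructor <;>
      simp [map_smul, LinearMap.smul_apply, (hx a).1, (hx a).2]

/-- Two-sided ideal of a Leibniz algebra. -/
def IsLeibnizIdeal {K A : Type*} [CommRing K] [AddCommGroup A] [Module K A]
    (br : A →ₗ[K] A →ₗ[K] A) (I : Submodule K A) : Prop :=
  ∀ a : A, ∀ x ∈ I, br a x ∈ I ∧ br x a ∈ I

/-- If `A` is a nilpotent left Leibniz algebra over `ℂ` with
`dim Leib(A) = 1`, then `Leib(A) ⊆ Z(A)`. -/
theorem leibIdeal_le_center_of_dim_one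
    {A : Type*} [AddCommGroup A] [Module ℂ A]
    (br : A →ₗ[ℂ] A →ₗ[ℂ] A) (hbr : IsLeibnizBracket br)
    (hnil : ∃ m : ℕ, lcs br m = ⊥)
    (hleib : Module.finrank ℂ ↥(leibIdeal br) = 1) :
    leibIdeal br ≤ leibnizCenter br := by
  classical
  -- squares annihilate on the right
  have hsq : ∀ a c : A, br (br a a) c = 0 := by
    intro a c
    exact right_eq_add.mp (hbr a a c)
  have hright : ∀ x ∈ leibIdeal br, ∀ a : A, br x a = 0 := by
    intro x hx
    refine Submodule.span_induction ?_ ?_ ?_ ?_ hx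
    · rintro y ⟨b, rfl⟩ a; exact hsq b a
    · intro a; simp
    · intro y z _ _ hy hz a; simp [map_add, hy a, hz a]
    · intro c y _ hy a; simp [hy a]
  -- Leib is a left ideal
  have hgen : ∀ u v : A, br u v + br v u ∈ leibIdeal br := by
    intro u v
    have h1 : br (u + v) (u + v) ∈ leibIdeal br := Submodule.subset_span ⟨_, rfl⟩
    have h2 : br u u ∈ leibIdeal br := Submodule.subset_span ⟨_, rfl⟩
    have h3 : br v v ∈ leibIdeal br := Submodule.subset_span ⟨_, rfl⟩
    have : br u v + br v u = br (u + v) (u + v) - br u u - br v v := by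
      simp only [map_add, LinearMap.add_apply]; abel
    rw [this]; exact sub_mem (sub_mem h1 h2) h3
  have hleft : ∀ a : A, ∀ x ∈ leibIdeal br, br a x ∈ leibIdeal br := by
    intro a x hx
    refine Submodule.span_induction ?_ ?_ ?_ ?_ hx
    · rintro y ⟨b, rfl⟩
      rw [hbr a b b]
      exact hgen (br a b) b
    · simp
    · intro y z _ _ hy hz; rw [map_add]; exact add_mem hy hz
    · intro c y _ hy; rw [map_smul]; exact Submodule.smul_mem _ _ hy
  -- pick a spanning element e of Leib
  obtain ⟨⟨e, heL⟩, he0, hspan⟩ := finrank_eq_one_iff'.mp hleib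
  have he0' : e ≠ 0 := fun h => he0 (Subtype.ext h)
  -- e is killed on the left
  have hleftzero : ∀ a : A, br a e = 0 := by
    intro a
    obtain ⟨c, hc⟩ := hspan ⟨br a e, hleft a e heL⟩
    have hc' : c • e = br a e := congrArg Subtype.val hc
    by_cases hcz : c = 0
    · rw [← hc', hcz, zero_smul]
    · exfalso
      obtain ⟨m, hm⟩ := hnil
      have hmem : ∀ n, e ∈ lcs br n := by
        intro n
        induction n with
        | zero => exact Submodule.mem_top
        | succ n ih =>
          refine Submodule.subset_span ⟨a, Submodule.mem_top, c⁻¹ • e,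
            Submodule.smul_mem _ _ ih, ?_⟩
          rw [map_smul, ← hc', smul_smul, inv_mul_cancel₀ hcz, one_smul]
      have := hmem m
      rw [hm, Submodule.mem_bot] at this
      exact he0' this
  -- finish
  intro x hx
  obtain ⟨c, hc⟩ := hspan ⟨x, hx⟩
  have hc' : c • e = x := congrArg Subtype.val hc
  intro a
  refine ⟨?_, hright x hx a⟩
  rw [← hc', map_smul, hleftzero a, smul_zero]
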